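/- Let f₀ be a quintic form whose zero locus in ℙ⁴ is smooth, i.e., the only common zero in ℂ⁵ of the partial derivatives ∂f₀/∂z₀, …, ∂f₀/∂z₄ is the origin. Let c ∈ V_d be admissible with f₀∘c = 0, and suppose dim_ℂ T(f₀,c) = 4. Then c is an immersion: for every (s₀,u₀) ∈ ℂ² ∖ {0}, the vectors (∂c⁰/∂s(s₀,u₀), …, ∂c⁴/∂s(s₀,u₀)) and (∂c⁰/∂u(s₀,u₀), …, ∂c⁴/∂u(s₀,u₀)) are linearly independent in ℂ⁵. -/

import Mathlib

open MvPolynomial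

noncomputable section

/-- The space `V_d` of 5-tuples of homogeneous degree-`d` binary forms,
as a submodule of all 5-tuples of polynomials in two variables. -/
def VdSub (d : ℕ) : Submodule ℂ (Fin 5 → MvPolynomial (Fin 2) ℂ) :=
  Submodule.pi Set.univ (fun _ => homogeneousSubmodule (Fin 2) ℂ d)

/-- The vector `(c⁰(v), …, c⁴(v)) ∈ ℂ⁵` obtained by evaluating a 5-tuple at `v ∈ ℂ²`. -/
def ImageVec (c : Fin 5 → MvPolynomial (Fin 2) ℂ) (v : Fin 2 → ℂ) : Fin 5 → ℂ :=
  fun i => eval v (c i)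

/-- The induced map `ℙ¹ → ℙ⁴` is injective outside a finite subset of `ℙ¹(ℂ)`. -/
def GenericallyInjective (c : Fin 5 → MvPolynomial (Fin 2) ℂ) : Prop :=
  ∃ S : Set (Projectivization ℂ (Fin 2 → ℂ)), S.Finite ∧
    ∀ (v w : Fin 2 → ℂ) (hv : v ≠ 0) (hw : w ≠ 0),
      Projectivization.mk ℂ v hv ∉ S → Projectivization.mk ℂ w hw ∉ S →
      (∃ lam : ℂ, lam ≠ 0 ∧ ImageVec c w = lam • ImageVec c v) →
      ∃ mu : ℂ, mu ≠ 0 ∧ w = mu • v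

/-- `c` is admissible: a tuple of degree-`d` forms with no common zero on `ℂ² ∖ {0}`,
inducing a map `ℙ¹ → ℙ⁴` that is injective outside a finite set. -/
def Admissible (d : ℕ) (c : Fin 5 → MvPolynomial (Fin 2) ℂ) : Prop :=
  c ∈ VdSub d ∧ (∀ v : Fin 2 → ℂ, v ≠ 0 → ImageVec c v ≠ 0) ∧ GenericallyInjective c

/-- A quintic form: a nonzero homogeneous polynomial of degree 5 in `z₀, …, z₄`. -/
def IsQuintic (f : MvPolynomial (Fin 5) ℂ) : Prop :=
  f ≠ 0 ∧ f.IsHomogeneous 5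

/-- Evaluation of a polynomial `P` in the coefficients of a quintic form;
the nonvanishing locus of a (nonzero homogeneous) `P` is a basic Zariski-open subset of the
projective space of quintic forms. -/
def coeffEval (P : MvPolynomial ((Fin 5) →₀ ℕ) ℂ) (f : MvPolynomial (Fin 5) ℂ) : ℂ :=
  eval (fun m => coeff m f) P

/-- The linear map `L(α) = Σ_i α_i · ((∂f/∂z_i)∘c)`. -/
def Lmap (f : MvPolynomial (Fin 5) ℂ) (c : Fin 5 → MvPolynomial (Fin 2) ℂ) :
    (Fin 5 → MvPolynomial (Fin 2) ℂ) →ₗ[ℂ] MvPolynomial (Fin 2) ℂ where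
  toFun α := ∑ i, α i * aeval c (pderiv i f)
  map_add' a b := by simp [add_mul, Finset.sum_add_distrib]
  map_smul' r a := by simp [Finset.smul_sum, smul_mul_assoc]

/-- The Zariski tangent space `T(f,c) = {α ∈ V_d : Σ_i α_i · ((∂f/∂z_i)∘c) = 0}`. -/
def Tspace (d : ℕ) (f : MvPolynomial (Fin 5) ℂ) (c : Fin 5 → MvPolynomial (Fin 2) ℂ) :
    Submodule ℂ (Fin 5 → MvPolynomial (Fin 2) ℂ) :=
  VdSub d ⊓ LinearMap.ker (Lmap f c)

/-- The tangent space `{α ∈ V_d : ∃ ε, L(α) + Σ_j ε_j • g_j = 0}` of a projected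
incidence scheme, for a finite family `g` of binary forms. -/
def tangentFam (d : ℕ) (f : MvPolynomial (Fin 5) ℂ) (c : Fin 5 → MvPolynomial (Fin 2) ℂ)
    {n : ℕ} (g : Fin n → MvPolynomial (Fin 2) ℂ) :
    Submodule ℂ (Fin 5 → MvPolynomial (Fin 2) ℂ) where
  carrier := {α | α ∈ VdSub d ∧ ∃ ε : Fin n → ℂ, Lmap f c α + ∑ j, ε j • g j = 0}
  zero_mem' := ⟨Submodule.zero_mem _, fun _ => 0, by simp⟩
  add_mem' := by
    rintro a b ⟨ha, εa, ea⟩ ⟨hb, εb, eb⟩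
    refine ⟨Submodule.add_mem _ ha hb, εa + εb, ?_⟩
    have h1 : (∑ j, (εa + εb) j • g j) = (∑ j, εa j • g j) + ∑ j, εb j • g j := by
      simp [add_smul, Finset.sum_add_distrib]
    rw [map_add, h1, add_add_add_comm, ea, eb, add_zero]
  smul_mem' := by
    rintro r a ⟨ha, ε, e⟩
    refine ⟨Submodule.smul_mem _ r ha, r • ε, ?_⟩
    have h1 : (∑ j, (r • ε) j • g j) = r • ∑ j, ε j • g j := by
      simp [Finset.smul_sum, mul_smul]
    rw [map_smul, h1, ← smul_add, e, smul_zero]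

/-- `c` is an immersion: at every point of `ℂ² ∖ {0}` the two partial-derivative
vectors in `ℂ⁵` are linearly independent. -/
def IsImmersion (c : Fin 5 → MvPolynomial (Fin 2) ℂ) : Prop :=
  ∀ v : Fin 2 → ℂ, v ≠ 0 →
    LinearIndependent ℂ
      ![fun i => eval v (pderiv (0 : Fin 2) (c i)), fun i => eval v (pderiv (1 : Fin 2) (c i))]


/-! ### Auxiliary lemmas -/

lemma degree2 (m : Fin 2 →₀ ℕ) : m.degree = m 0 + m 1 := by
  rw [Finsupp.degree_apply, Finset.sum_subset (Finset.subset_univ _)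
    (by intro x _ hx; simpa using hx), Fin.sum_univ_two]

lemma chainrule (k : Fin 2) (c : Fin 5 → MvPolynomial (Fin 2) ℂ) (f : MvPolynomial (Fin 5) ℂ) :
    pderiv k (aeval c f) = ∑ i, aeval c (pderiv i f) * pderiv k (c i) := by
  induction f using MvPolynomial.induction_on with
  | C a => simp
  | add p q hp hq =>
      rw [map_add, map_add, hp, hq, ← Finset.sum_add_distrib]
      exact Finset.sum_congr rfl fun i _ => by simp [add_mul]
  | mul_X p j hp =>
      have h1 : aeval c (p * X j) = aeval c p * c j := by simp
      rw [h1, pderiv_mul, hp]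
      have h2 : ∀ i : Fin 5, aeval c (pderiv i (p * X j)) * pderiv k (c i)
          = aeval c (pderiv i p) * pderiv k (c i) * c j
            + (if i = j then aeval c p * pderiv k (c i) else 0) := by
        intro i
        rw [pderiv_mul]
        classical
        rw [pderiv_X]
        by_cases h : i = j
        · subst h; simp; ring
        · rw [Pi.single_eq_of_ne (Ne.symm h)]
          simp [h]
          ring
      rw [Finset.sum_congr rfl fun i _ => h2 i, Finset.sum_add_distrib,
        Finset.sum_ite_eq' Finset.univ j]
      simp only [Finset.mem_univ, if_true, ← Finset.sum_mul]

lemma euler_mon (m : Fin 2 →₀ ℕ) (r : ℂ) :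
    X 0 * pderiv 0 (monomial m r) + X 1 * pderiv 1 (monomial m r)
      = C ((m 0 + m 1 : ℕ) : ℂ) * monomial m r := by
  have key : ∀ i : Fin 2, X i * pderiv i (monomial m r) = C ((m i : ℕ) : ℂ) * monomial m r := by
    intro i
    rw [pderiv_monomial]
    by_cases h : m i = 0
    · simp [h]
    · have hle : Finsupp.single i 1 ≤ m := by
        rw [Finsupp.single_le_iff]; omega
      rw [X, monomial_mul, C_mul_monomial, one_mul, add_comm, tsub_add_cancel_of_le hle,
        mul_comm r]
  rw [key 0, key 1, ← add_mul, ← map_add, ← Nat.cast_add]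

lemma euler2 {p : MvPolynomial (Fin 2) ℂ} {n : ℕ} (hp : p.IsHomogeneous n) :
    X 0 * pderiv 0 p + X 1 * pderiv 1 p = C (n : ℂ) * p := by
  conv_lhs => rw [p.as_sum]
  conv_rhs => rw [p.as_sum]
  simp only [map_sum, Finset.mul_sum]
  rw [← Finset.sum_add_distrib]
  refine Finset.sum_congr rfl fun m hm => ?_
  rw [euler_mon]
  congr 2
  have hdeg : m.degree = n := by
    by_contra h
    exact (mem_support_iff.mp hm) (hp.coeff_eq_zero h)
  rw [← hdeg, degree2]

lemma pderiv_homog {p : MvPolynomial (Fin 2) ℂ} {n : ℕ} (hp : p.IsHomogeneous n) (i : Fin 2) :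
    (pderiv i p).IsHomogeneous (n - 1) := by
  conv => arg 1; rw [p.as_sum]
  rw [map_sum]
  apply IsHomogeneous.sum
  intro m hm
  rw [pderiv_monomial]
  by_cases h : m i = 0
  · simp [h]; exact isHomogeneous_zero _ _ _
  · apply isHomogeneous_monomial
    have hdeg : m.degree = n := by
      by_contra hc
      exact (mem_support_iff.mp hm) (hp.coeff_eq_zero hc)
    rw [degree2] at hdeg ⊢
    rw [Finsupp.tsub_apply, Finsupp.tsub_apply]
    by_cases hi : i = 0
    · subst hi; simp [Finsupp.single_apply]; omega
    · have hi1 : i = 1 := Fin.eq_one_of_ne_zero i hi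
      subst hi1; simp [Finsupp.single_apply]; omega

lemma eval_smul_homog {p : MvPolynomial (Fin 2) ℂ} {n : ℕ} (hp : p.IsHomogeneous n)
    (r : ℂ) (v : Fin 2 → ℂ) : eval (r • v) p = r ^ n * eval v p := by
  conv_lhs => rw [p.as_sum]
  conv_rhs => rw [p.as_sum]
  rw [map_sum, map_sum, Finset.mul_sum]
  refine Finset.sum_congr rfl fun m hm => ?_
  have hdeg : m.degree = n := by
    by_contra h
    exact (mem_support_iff.mp hm) (hp.coeff_eq_zero h)
  rw [eval_monomial, eval_monomial]
  have : (m.prod fun i k => (r • v) i ^ k) = r ^ n * m.prod fun i k => v i ^ k := by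
    rw [Finsupp.prod, Finsupp.prod]
    rw [Finset.prod_congr rfl (fun i _ => by
      rw [Pi.smul_apply, smul_eq_mul, mul_pow])]
    rw [Finset.prod_mul_distrib, Finset.prod_pow_eq_pow_sum, ← Finsupp.degree_apply, hdeg]
  rw [this]; ring

abbrev PhiMap : MvPolynomial (Fin 2) ℂ →ₐ[ℂ] Polynomial ℂ := aeval ![1, Polynomial.X]

lemma phi_eval (t : ℂ) (g : MvPolynomial (Fin 2) ℂ) :
    (PhiMap g).eval t = eval ![1, t] g := by
  induction g using MvPolynomial.induction_on with
  | C a => simp [PhiMap]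
  | add p q hp hq => simp [map_add, hp, hq]
  | mul_X p i hp =>
      simp only [map_mul, aeval_X, Polynomial.eval_mul, hp, eval_mul, eval_X]
      congr 1
      fin_cases i <;> simp

lemma phi_deriv (g : MvPolynomial (Fin 2) ℂ) :
    Polynomial.derivative (PhiMap g) = PhiMap (pderiv 1 g) := by
  have h01 : (0 : Fin 2) ≠ 1 := by decide
  induction g using MvPolynomial.induction_on with
  | C a => simp [PhiMap]
  | add p q hp hq => simp [map_add, hp, hq]
  | mul_X p i hp =>
      rw [map_mul, aeval_X]
      by_cases hi : i = 0
      · subst hi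
        simp only [Matrix.cons_val_zero, mul_one, pderiv_mul, pderiv_X_of_ne h01,
          mul_zero, add_zero, map_mul, aeval_X, hp]
      · have hi1 : i = 1 := Fin.eq_one_of_ne_zero i hi
        subst hi1
        simp only [Matrix.cons_val_one, Matrix.head_cons, Matrix.cons_val_zero]
        rw [Polynomial.derivative_mul, hp, Polynomial.derivative_X, pderiv_mul,
          pderiv_X_self, mul_one, map_add, map_mul, aeval_X]
        simp only [Matrix.cons_val_one, Matrix.head_cons, Matrix.cons_val_zero]
        ring

lemma phi_inj_homog {g : MvPolynomial (Fin 2) ℂ} {n : ℕ} (hg : g.IsHomogeneous n)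
    (h : PhiMap g = 0) : g = 0 := by
  have hz : ∀ v : Fin 2 → ℂ, eval v (X 0 * g) = 0 := by
    intro v
    rw [eval_mul, eval_X]
    by_cases h0 : v 0 = 0
    · rw [h0, zero_mul]
    · have hv : v = v 0 • ![1, v 1 / v 0] := by
        funext j
        by_cases hj : j = 0
        · subst hj; simp
        · rw [Fin.eq_one_of_ne_zero j hj]; simp [h0]; field_simp
      rw [hv, eval_smul_homog hg, ← phi_eval, h]
      simp
  have hXg : X 0 * g = 0 := by
    apply MvPolynomial.funext (q := 0)
    simpa using hz
  rcases mul_eq_zero.mp hXg with h1 | h2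
  · exact absurd h1 (X_ne_zero 0)
  · exact h2

lemma deriv_lead {g : Polynomial ℂ} (hg : g ≠ 0) (hmg : g.natDegree ≠ 0) :
    (Polynomial.derivative g).natDegree = g.natDegree - 1 ∧
    (Polynomial.derivative g).leadingCoeff = (g.natDegree : ℂ) * g.leadingCoeff := by
  set b := g.natDegree with hb
  have hcast : ((b - 1 : ℕ) : ℂ) + 1 = (b : ℂ) := by
    have hb1 : (1:ℕ) ≤ b := Nat.one_le_iff_ne_zero.mpr hmg
    push_cast [hb1]
    ring
  have hd : (Polynomial.derivative g).natDegree = b - 1 := by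
    have h1 := Polynomial.natDegree_derivative_lt hmg
    have h2 : b - 1 ≤ (Polynomial.derivative g).natDegree := by
      by_contra hcon
      push_neg at hcon
      have hc : (Polynomial.derivative g).coeff (b - 1) = 0 :=
        Polynomial.coeff_eq_zero_of_natDegree_lt hcon
      rw [Polynomial.coeff_derivative, show b - 1 + 1 = b from by omega] at hc
      have hbne : ((b - 1 : ℕ) : ℂ) + 1 ≠ 0 := by
        rw [hcast]; exact Nat.cast_ne_zero.mpr hmg
      have : g.coeff b = 0 := (mul_eq_zero.mp hc).resolve_right hbne
      exact Polynomial.leadingCoeff_ne_zero.mpr hg this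
    omega
  refine ⟨hd, ?_⟩
  rw [Polynomial.leadingCoeff, hd, Polynomial.coeff_derivative,
    show b - 1 + 1 = b from by omega, hcast, Polynomial.leadingCoeff]
  ring

/-- One-variable: if `f g' = g f'` and `g ≠ 0` then `f` is a scalar multiple of `g`. -/
lemma polyA : ∀ (m : ℕ) (f g : Polynomial ℂ), f.natDegree ≤ m → g ≠ 0 →
    f * Polynomial.derivative g = g * Polynomial.derivative f →
    ∃ t : ℂ, f = Polynomial.C t * g := by
  intro m
  induction m using Nat.strong_induction_on with
  | _ m IH =>
    intro f g hdeg hg h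
    by_cases hf : f = 0
    · exact ⟨0, by simp [hf]⟩
    by_cases hg' : Polynomial.derivative g = 0
    · have hf' : Polynomial.derivative f = 0 := by
        have h2 := h
        rw [hg', mul_zero] at h2
        rcases mul_eq_zero.mp h2.symm with h1 | h2
        · exact absurd h1 hg
        · exact h2
      obtain ⟨a, ha⟩ := Polynomial.natDegree_eq_zero.mp
        (Polynomial.natDegree_eq_zero_of_derivative_eq_zero hf')
      obtain ⟨b, hb⟩ := Polynomial.natDegree_eq_zero.mp
        (Polynomial.natDegree_eq_zero_of_derivative_eq_zero hg')
      have hb0 : b ≠ 0 := fun hb0 => hg (by rw [← hb, hb0, map_zero])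
      exact ⟨a / b, by rw [← ha, ← hb, ← map_mul, div_mul_cancel₀ _ hb0]⟩
    · have hf' : Polynomial.derivative f ≠ 0 := by
        intro hf'
        rw [hf', mul_zero] at h
        rcases mul_eq_zero.mp h with h1 | h2 <;> [exact hf h1; exact hg' h2]
      have hmf : f.natDegree ≠ 0 := fun h0 => hf' (Polynomial.derivative_of_natDegree_zero h0)
      have hmg : g.natDegree ≠ 0 := fun h0 => hg' (Polynomial.derivative_of_natDegree_zero h0)
      obtain ⟨hgd, hlgd⟩ := deriv_lead hg hmg
      obtain ⟨hfd, hlfd⟩ := deriv_lead hf hmf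
      have hfl : f.leadingCoeff ≠ 0 := Polynomial.leadingCoeff_ne_zero.mpr hf
      have hgl : g.leadingCoeff ≠ 0 := Polynomial.leadingCoeff_ne_zero.mpr hg
      have hlead := congrArg Polynomial.leadingCoeff h
      rw [Polynomial.leadingCoeff_mul, Polynomial.leadingCoeff_mul, hlgd, hlfd] at hlead
      have hab' : f.natDegree = g.natDegree := by
        have hcan : (g.natDegree : ℂ) * (f.leadingCoeff * g.leadingCoeff)
            = (f.natDegree : ℂ) * (f.leadingCoeff * g.leadingCoeff) := by
          linear_combination hlead
        have := mul_right_cancel₀ (mul_ne_zero hfl hgl) hcan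
        exact_mod_cast this.symm
      set t := f.leadingCoeff / g.leadingCoeff with ht
      by_cases hzero : f - Polynomial.C t * g = 0
      · exact ⟨t, by linear_combination hzero⟩
      have hrel : (f - Polynomial.C t * g) * Polynomial.derivative g
          = g * Polynomial.derivative (f - Polynomial.C t * g) := by
        rw [Polynomial.derivative_sub, Polynomial.derivative_C_mul]
        linear_combination h
      have hcoeff : (f - Polynomial.C t * g).coeff f.natDegree = 0 := by
        simp only [Polynomial.coeff_sub, Polynomial.coeff_C_mul]
        rw [hab', Polynomial.coeff_natDegree, ht, ← hab', Polynomial.coeff_natDegree,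
          div_mul_cancel₀ _ hgl, sub_self]
      have hdegh : (f - Polynomial.C t * g).natDegree < f.natDegree := by
        have hle : (f - Polynomial.C t * g).natDegree ≤ f.natDegree := by
          apply le_trans (Polynomial.natDegree_sub_le _ _)
          simp only [max_le_iff]
          refine ⟨le_refl _, ?_⟩
          apply le_trans (Polynomial.natDegree_C_mul_le _ _)
          omega
        rcases lt_or_eq_of_le hle with h1 | h2
        · exact h1
        · exfalso
          have hl := Polynomial.leadingCoeff_ne_zero.mpr hzero
          rw [Polynomial.leadingCoeff, h2] at hl
          exact hl hcoeff
      obtain ⟨t', ht'⟩ := IH (f - Polynomial.C t * g).natDegree (by omega)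
        (f - Polynomial.C t * g) g (le_refl _) hg hrel
      by_cases ht'0 : t' = 0
      · rw [ht'0, map_zero, zero_mul, sub_eq_zero] at ht'
        exact ⟨t, ht'⟩
      · exfalso
        have hdd : (f - Polynomial.C t * g).natDegree = g.natDegree := by
          rw [ht', Polynomial.natDegree_C_mul ht'0]
        omega

lemma dvd_aux {h : MvPolynomial (Fin 2) ℂ} {k : ℕ} {v : Fin 2 → ℂ}
    (hh : h.IsHomogeneous k) (hv1 : v 1 ≠ 0) (hval : eval v h = 0) :
    (C (v 1) * X 0 - C (v 0) * X 1) ∣ h := by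
  set a := v 0 / v 1 with ha
  set w : MvPolynomial (Fin 1) ℂ := C a * X 0 with hw
  -- the substitution hom
  set β : MvPolynomial (Fin 2) ℂ →ₐ[ℂ] MvPolynomial (Fin 1) ℂ :=
    aeval ![C a * X 0, X 0] with hβ
  have hβh : β h = 0 := by
    apply MvPolynomial.funext (q := 0)
    intro y
    rw [map_zero]
    have hcomp : eval y (β h) = eval ![a * y 0, y 0] h := by
      have hcomp2 : (eval y).comp (β : MvPolynomial (Fin 2) ℂ →+* MvPolynomial (Fin 1) ℂ)
          = (eval ![a * y 0, y 0] : MvPolynomial (Fin 2) ℂ →+* ℂ) := by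
        apply MvPolynomial.ringHom_ext
        · intro r; simp [hβ]
        · intro i
          by_cases hi : i = 0
          · subst hi; simp [hβ]
          · have hi1 : i = 1 := Fin.eq_one_of_ne_zero i hi
            subst hi1; simp [hβ]
      exact RingHom.congr_fun hcomp2 h
    rw [hcomp]
    have hvec : ![a * y 0, y 0] = (y 0 / v 1) • v := by
      funext j
      by_cases hj : j = 0
      · subst hj; simp [ha]; field_simp
      · have hj1 : j = 1 := Fin.eq_one_of_ne_zero j hj
        subst hj1; simp; field_simp
    rw [hvec, eval_smul_homog hh, hval, mul_zero]
  -- transfer to Polynomial (MvPolynomial (Fin 1) ℂ)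
  have hroot : Polynomial.eval w ((finSuccEquiv ℂ 1) h) = 0 := by
    have hcomp : (Polynomial.evalRingHom w).comp
        ((finSuccEquiv ℂ 1) : MvPolynomial (Fin 2) ℂ →+* Polynomial (MvPolynomial (Fin 1) ℂ))
        = (β : MvPolynomial (Fin 2) ℂ →+* MvPolynomial (Fin 1) ℂ) := by
      apply MvPolynomial.ringHom_ext
      · intro r
        simp [finSuccEquiv_apply, hβ]
      · intro i
        have hX1 : (finSuccEquiv ℂ 1) (X (1 : Fin 2)) = Polynomial.C (X 0) :=
          finSuccEquiv_X_succ (j := (0 : Fin 1))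
        by_cases hi : i = 0
        · subst hi
          simp [finSuccEquiv_X_zero, hβ, hw]
        · have hi1 : i = 1 := Fin.eq_one_of_ne_zero i hi
          subst hi1
          simp only [RingHom.comp_apply, RingHom.coe_coe, hX1]
          simp [hβ]
    have := RingHom.congr_fun hcomp h
    simpa [hβh] using this
  have hdvd1 : (Polynomial.X - Polynomial.C w) ∣ (finSuccEquiv ℂ 1) h :=
    Polynomial.dvd_iff_isRoot.mpr hroot
  have hX1 : (finSuccEquiv ℂ 1) (X (1 : Fin 2)) = Polynomial.C (X 0) :=
    finSuccEquiv_X_succ (j := (0 : Fin 1))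
  have hCa : (finSuccEquiv ℂ 1) (C a) = Polynomial.C (C a) := by
    simp [finSuccEquiv_apply]
  have hfwd : (finSuccEquiv ℂ 1) (X 0 - C a * X 1)
      = Polynomial.X - Polynomial.C (C a) * Polynomial.C (X 0) := by
    rw [map_sub, map_mul, finSuccEquiv_X_zero, hCa, hX1]
  have hsymm : ((finSuccEquiv ℂ 1).symm (Polynomial.X - Polynomial.C w)) = X 0 - C a * X 1 := by
    rw [AlgEquiv.symm_apply_eq, hfwd, hw, Polynomial.C_mul]
  have hdvd2 : (X 0 - C a * X 1) ∣ h := by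
    obtain ⟨e, he⟩ := hdvd1
    refine ⟨(finSuccEquiv ℂ 1).symm e, ?_⟩
    have := congrArg (finSuccEquiv ℂ 1).symm he
    rw [AlgEquiv.symm_apply_apply, map_mul, hsymm] at this
    exact this
  obtain ⟨e, he⟩ := hdvd2
  refine ⟨C (v 1)⁻¹ * e, ?_⟩
  rw [he]
  have hv0 : v 0 = v 1 * a := by rw [ha, mul_div_assoc', mul_div_cancel_left₀ _ hv1]
  rw [hv0, map_mul]
  have hC : (C (v 1) : MvPolynomial (Fin 2) ℂ) * C (v 1)⁻¹ = 1 := by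
    rw [← map_mul, mul_inv_cancel₀ hv1, map_one]
  linear_combination (-(X 0 - C a * X 1) * e) * hC

lemma dvd_linear {h : MvPolynomial (Fin 2) ℂ} {k : ℕ} {v : Fin 2 → ℂ}
    (hh : h.IsHomogeneous k) (hv : v ≠ 0) (hval : eval v h = 0) :
    (C (v 1) * X 0 - C (v 0) * X 1) ∣ h := by
  by_cases hv1 : v 1 ≠ 0
  · exact dvd_aux hh hv1 hval
  · push_neg at hv1
    have hv0 : v 0 ≠ 0 := by
      intro h0
      apply hv
      funext j
      by_cases hj : j = 0
      · subst hj; exact h0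
      · rw [Fin.eq_one_of_ne_zero j hj]; exact hv1
    set σe := Equiv.swap (0 : Fin 2) 1 with hσ
    have hswap : ∀ p : MvPolynomial (Fin 2) ℂ, rename σe (rename σe p) = p := by
      intro p
      rw [rename_rename]
      have : (σe : Fin 2 → Fin 2) ∘ σe = id := by
        funext j; simp [hσ]
      rw [this, rename_id_apply]
    have hh2 : (rename σe h).IsHomogeneous k := hh.rename_isHomogeneous
    have hval2 : eval ![v 1, v 0] (rename σe h) = 0 := by
      rw [eval_rename]
      have : (![v 1, v 0] ∘ σe) = v := by
        funext j
        by_cases hj : j = 0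
        · subst hj; simp [hσ]
        · rw [Fin.eq_one_of_ne_zero j hj]; simp [hσ]
      rw [this, hval]
    have hdvd := dvd_aux (v := ![v 1, v 0]) hh2 (by simpa using hv0) hval2
    obtain ⟨e, he⟩ := hdvd
    have := congrArg (rename σe) he
    rw [hswap, map_mul, map_sub, map_mul, map_mul, rename_C, rename_C, rename_X, rename_X] at this
    simp only [Matrix.cons_val_zero, Matrix.cons_val_one, Matrix.head_cons] at this
    rw [hσ] at this
    rw [Equiv.swap_apply_left, Equiv.swap_apply_right] at this
    refine ⟨-(rename σe e), ?_⟩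
    rw [this]
    ring

lemma quot_homog {l e : MvPolynomial (Fin 2) ℂ} {k : ℕ} (hl : l.IsHomogeneous 1) (hk : 1 ≤ k)
    (hle : (l * e).IsHomogeneous k) :
    l * homogeneousComponent (k - 1) e = l * e := by
  have h1 : l * e = ∑ i ∈ Finset.range (e.totalDegree + 1), l * homogeneousComponent i e := by
    rw [← Finset.mul_sum, sum_homogeneousComponent]
  have h2 : homogeneousComponent k (l * e) = l * e := by
    rw [homogeneousComponent_of_mem ((mem_homogeneousSubmodule _ _).mpr hle), if_pos rfl]
  have h3 : homogeneousComponent k (l * e)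
      = ∑ i ∈ Finset.range (e.totalDegree + 1), homogeneousComponent k (l * homogeneousComponent i e) := by
    conv_lhs => rw [h1]
    rw [map_sum]
  have h4 : ∀ i, homogeneousComponent k (l * homogeneousComponent i e)
      = if k - 1 = i then l * homogeneousComponent i e else 0 := by
    intro i
    have hmem : l * homogeneousComponent i e ∈ homogeneousSubmodule (Fin 2) ℂ (1 + i) :=
      (mem_homogeneousSubmodule _ _).mpr (hl.mul (homogeneousComponent_isHomogeneous i e))
    rw [homogeneousComponent_of_mem hmem]
    congr 1
    rw [eq_iff_iff]
    omega
  rw [Finset.sum_congr rfl (fun i _ => h4 i), Finset.sum_ite_eq] at h3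
  by_cases hin : k - 1 ∈ Finset.range (e.totalDegree + 1)
  · rw [if_pos hin] at h3
    rw [← h3, h2]
  · rw [if_neg hin] at h3
    have hz : homogeneousComponent (k - 1) e = 0 := by
      apply homogeneousComponent_eq_zero
      simp only [Finset.mem_range] at hin
      omega
    rw [hz, mul_zero, ← h3, h2]

lemma div_linear {h : MvPolynomial (Fin 2) ℂ} {k : ℕ} {v : Fin 2 → ℂ}
    (hh : h.IsHomogeneous k) (hv : v ≠ 0) (hval : eval v h = 0) :
    ∃ h' : MvPolynomial (Fin 2) ℂ, h'.IsHomogeneous (k - 1) ∧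
      h = (C (v 1) * X 0 - C (v 0) * X 1) * h' := by
  by_cases hk : k = 0
  · subst hk
    have hC : h = C (coeff 0 h) := by
      ext m
      by_cases hm : m = 0
      · subst hm; simp
      · rw [coeff_C, if_neg (Ne.symm hm)]
        apply hh.coeff_eq_zero
        rw [Ne, Finsupp.degree_eq_zero_iff]
        exact hm
    rw [hC] at hval ⊢
    rw [eval_C] at hval
    exact ⟨0, isHomogeneous_zero _ _ _, by rw [hval, map_zero, mul_zero]⟩
  · obtain ⟨e, he⟩ := dvd_linear hh hv hval
    refine ⟨homogeneousComponent (k - 1) e, homogeneousComponent_isHomogeneous _ _, ?_⟩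
    have hl : (C (v 1) * X 0 - C (v 0) * X 1 : MvPolynomial (Fin 2) ℂ).IsHomogeneous 1 := by
      exact ((isHomogeneous_X _ 0).C_mul _).sub ((isHomogeneous_X _ 1).C_mul _)
    rw [quot_homog hl (by omega) (he ▸ hh), ← he]

lemma hom_of_mem {d : ℕ} {c : Fin 5 → MvPolynomial (Fin 2) ℂ} (h : c ∈ VdSub d) :
    ∀ i, (c i).IsHomogeneous d := by
  intro i
  rw [VdSub, Submodule.mem_pi] at h
  exact (mem_homogeneousSubmodule _ _).mp (h i (Set.mem_univ i))

lemma vec1x_ne (x : ℂ) : (![1, x] : Fin 2 → ℂ) ≠ 0 := by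
  intro h
  have := congrFun h 0
  simp at this

lemma exists_comp_ne {d : ℕ} {c : Fin 5 → MvPolynomial (Fin 2) ℂ}
    (hadm : Admissible d c) : ∃ i, c i ≠ 0 := by
  have h := hadm.2.1 ![1, 0] (vec1x_ne 0)
  rw [Function.ne_iff] at h
  obtain ⟨i, hi⟩ := h
  exact ⟨i, fun h0 => hi (by simp [ImageVec, h0])⟩

lemma homog_zero_eq_C {h : MvPolynomial (Fin 2) ℂ} (hh : h.IsHomogeneous 0) :
    h = C (coeff 0 h) := by
  ext m
  by_cases hm : m = 0
  · subst hm; simp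
  · rw [coeff_C, if_neg (Ne.symm hm)]
    apply hh.coeff_eq_zero
    rw [Ne, Finsupp.degree_eq_zero_iff]
    exact hm

/-- If all `u`-Wronskians of the components of an admissible tuple vanish, we get a
contradiction with generic injectivity. -/
lemma lemB {d : ℕ} {c : Fin 5 → MvPolynomial (Fin 2) ℂ} (hd : 1 ≤ d)
    (hadm : Admissible d c)
    (hW : ∀ i j, c i * pderiv 1 (c j) = c j * pderiv 1 (c i)) : False := by
  obtain ⟨hVd, hnz, S, hSfin, hS⟩ := hadm
  have hhom : ∀ i, (c i).IsHomogeneous d := hom_of_mem hVd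
  have h10 := hnz ![1, 0] (vec1x_ne 0)
  rw [Function.ne_iff] at h10
  obtain ⟨j₀, hj₀⟩ := h10
  have hg : c j₀ ≠ 0 := fun h0 => hj₀ (by simp [ImageVec, h0])
  have hphig : PhiMap (c j₀) ≠ 0 := fun h0 => hg (phi_inj_homog (hhom j₀) h0)
  have hti : ∀ i, ∃ t : ℂ, c i = C t * c j₀ := by
    intro i
    have hrel2 : PhiMap (c i) * Polynomial.derivative (PhiMap (c j₀))
        = PhiMap (c j₀) * Polynomial.derivative (PhiMap (c i)) := by
      rw [phi_deriv, phi_deriv, ← map_mul, ← map_mul, hW i j₀]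
    obtain ⟨t, ht⟩ := polyA (PhiMap (c i)).natDegree (PhiMap (c i)) (PhiMap (c j₀))
      le_rfl hphig hrel2
    refine ⟨t, ?_⟩
    have hz : PhiMap (c i - C t * c j₀) = 0 := by
      rw [map_sub, map_mul, ht]
      have : PhiMap (C t) = Polynomial.C t := by simp [PhiMap]
      rw [this, sub_self]
    exact sub_eq_zero.mp (phi_inj_homog ((hhom i).sub ((hhom j₀).C_mul t)) hz)
  choose t ht using hti
  -- the induced map is projectively constant: contradiction with generic injectivity
  have hinj : ∀ x y : ℂ, (Projectivization.mk ℂ ![1, x] (vec1x_ne x)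
      = Projectivization.mk ℂ ![1, y] (vec1x_ne y)) → x = y := by
    intro x y hxy
    rw [Projectivization.mk_eq_mk_iff'] at hxy
    obtain ⟨a, hax⟩ := hxy
    have h0 := congrFun hax 0
    have h1 := congrFun hax 1
    simp at h0 h1
    rw [h0, one_mul] at h1
    exact h1.symm
  set Bad : Set ℂ :=
    ((fun x : ℂ => Projectivization.mk ℂ ![1, x] (vec1x_ne x)) ⁻¹' S)
      ∪ {x | (PhiMap (c j₀)).IsRoot x} with hBad
  have hBadfin : Bad.Finite := by
    apply Set.Finite.union
    · apply Set.Finite.preimage _ hSfin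
      intro x _ y _ hxy
      exact hinj x y hxy
    · exact Polynomial.finite_setOf_isRoot hphig
  obtain ⟨x, hx, y, hy, hxy⟩ := (hBadfin.infinite_compl).nontrivial
  simp only [Set.mem_compl_iff, hBad, Set.mem_union, Set.mem_preimage, Set.mem_setOf_eq,
    not_or] at hx hy
  have hgx : eval ![1, x] (c j₀) ≠ 0 := by
    rw [← phi_eval]; exact hx.2
  have hgy : eval ![1, y] (c j₀) ≠ 0 := by
    rw [← phi_eval]; exact hy.2
  obtain ⟨mu, hmu0, hmu⟩ := hS ![1, x] ![1, y] (vec1x_ne x) (vec1x_ne y) hx.1 hy.1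
    ⟨eval ![1, y] (c j₀) / eval ![1, x] (c j₀), div_ne_zero hgy hgx, by
      funext i
      simp only [ImageVec, Pi.smul_apply, smul_eq_mul]
      rw [ht i, eval_mul, eval_mul, eval_C, eval_C]
      field_simp⟩
  have h0 := congrFun hmu 0
  have h1 := congrFun hmu 1
  simp at h0 h1
  rw [← h0, one_mul] at h1
  exact hxy h1.symm

/-- Key relation lemma: if `P·∂₀c + Q·∂₁c = 0` componentwise, with `P, Q` homogeneous of the
same degree, then `P = Q = 0`. -/
lemma lemW {d : ℕ} {c : Fin 5 → MvPolynomial (Fin 2) ℂ} (hd : 1 ≤ d) (hadm : Admissible d c)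
    {k : ℕ} {P Q : MvPolynomial (Fin 2) ℂ} (hP : P.IsHomogeneous k) (hQ : Q.IsHomogeneous k)
    (hrel : ∀ i, P * pderiv 0 (c i) + Q * pderiv 1 (c i) = 0) : P = 0 ∧ Q = 0 := by
  have hhom : ∀ i, (c i).IsHomogeneous d := hom_of_mem hadm.1
  have heuler : ∀ i, X 0 * pderiv 0 (c i) + X 1 * pderiv 1 (c i) = C (d : ℂ) * c i :=
    fun i => euler2 (hhom i)
  have hd0 : (d : ℂ) ≠ 0 := Nat.cast_ne_zero.mpr (by omega)
  by_cases hDel : X 1 * P - X 0 * Q = 0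
  · have hXP : X 1 * P = X 0 * Q := by linear_combination hDel
    have hPv : eval ![0, 1] P = 0 := by
      have := congrArg (eval ![0, 1]) hXP
      simpa using this
    obtain ⟨A, hAhom, hA⟩ := div_linear (v := ![0, 1]) hP (by intro h; have := congrFun h 1; simp at this) hPv
    have hA' : P = X 0 * A := by
      rw [hA]
      simp
    have hQA : Q = X 1 * A := by
      have h2 : X 0 * Q = X 0 * (X 1 * A) := by
        rw [← hXP, hA']; ring
      exact mul_left_cancel₀ (X_ne_zero 0) h2
    obtain ⟨i₀, hi₀⟩ := exists_comp_ne hadm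
    have hAc : A * (C (d : ℂ) * c i₀) = 0 := by
      have hr := hrel i₀
      rw [hA', hQA] at hr
      linear_combination hr - A * heuler i₀
    have hA0 : A = 0 := by
      rcases mul_eq_zero.mp hAc with h1 | h2
      · exact h1
      · exfalso
        rcases mul_eq_zero.mp h2 with h3 | h4
        · exact hd0 (by simpa using (MvPolynomial.C_eq_zero.mp h3))
        · exact hi₀ h4
    exact ⟨by rw [hA', hA0, mul_zero], by rw [hQA, hA0, mul_zero]⟩
  · exfalso
    have key2 : ∀ i, (X 1 * P - X 0 * Q) * pderiv 1 (c i) = P * (C (d : ℂ) * c i) := by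
      intro i
      linear_combination (-(X 0)) * hrel i + P * heuler i
    apply lemB hd hadm
    intro i j
    have hij : (X 1 * P - X 0 * Q) * (c i * pderiv 1 (c j) - c j * pderiv 1 (c i)) = 0 := by
      linear_combination (c i) * key2 j - (c j) * key2 i
    rcases mul_eq_zero.mp hij with h1 | h2
    · exact absurd h1 hDel
    · linear_combination h2



/-! ### Finite dimensionality -/

lemma fd_homog (d : ℕ) : FiniteDimensional ℂ ↥(homogeneousSubmodule (Fin 2) ℂ d) := by
  have hle : homogeneousSubmodule (Fin 2) ℂ d ≤ Submodule.span ℂ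
      (Set.range (fun j : Fin (d+1) =>
        (monomial (Finsupp.single 0 (j : ℕ) + Finsupp.single 1 (d - (j : ℕ))) 1 :
          MvPolynomial (Fin 2) ℂ))) := by
    intro p hp
    rw [mem_homogeneousSubmodule] at hp
    rw [p.as_sum]
    apply Submodule.sum_mem
    intro m hm
    have hdeg : m 0 + m 1 = d := by
      have h1 : m.degree = d := by
        by_contra h
        exact (mem_support_iff.mp hm) (hp.coeff_eq_zero h)
      rw [degree2] at h1; exact h1
    have hm' : m = Finsupp.single 0 (m 0) + Finsupp.single 1 (d - m 0) := by
      ext j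
      by_cases hj : j = 0
      · subst hj; simp [Finsupp.single_apply]
      · rw [Fin.eq_one_of_ne_zero j hj]
        simp [Finsupp.single_apply]
        omega
    have hsm : monomial m (coeff m p) = (coeff m p) • monomial m 1 := by
      rw [smul_monomial, smul_eq_mul, mul_one]
    rw [hsm]
    apply Submodule.smul_mem
    apply Submodule.subset_span
    refine ⟨⟨m 0, by omega⟩, ?_⟩
    show monomial (Finsupp.single 0 (m 0) + Finsupp.single 1 (d - m 0)) 1 = monomial m 1
    exact congrArg (fun z => monomial z (1 : ℂ)) hm'.symm
  haveI := FiniteDimensional.span_of_finite ℂ (Set.finite_range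
      (fun j : Fin (d+1) =>
        (monomial (Finsupp.single 0 (j : ℕ) + Finsupp.single 1 (d - (j : ℕ))) 1 :
          MvPolynomial (Fin 2) ℂ)))
  exact Submodule.finiteDimensional_of_le hle

lemma fd_Vd (d : ℕ) : FiniteDimensional ℂ ↥(VdSub d) := by
  haveI := fd_homog d
  set Ψ : (Fin 5 → ↥(homogeneousSubmodule (Fin 2) ℂ d)) →ₗ[ℂ] (Fin 5 → MvPolynomial (Fin 2) ℂ) :=
    LinearMap.pi (fun i => (homogeneousSubmodule (Fin 2) ℂ d).subtype.comp (LinearMap.proj i))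
    with hΨ
  have hle : VdSub d ≤ LinearMap.range Ψ := by
    intro x hx
    rw [VdSub, Submodule.mem_pi] at hx
    exact ⟨fun i => ⟨x i, hx i (Set.mem_univ i)⟩, rfl⟩
  exact Submodule.finiteDimensional_of_le hle

lemma fd_T (d : ℕ) (f₀ : MvPolynomial (Fin 5) ℂ) (c : Fin 5 → MvPolynomial (Fin 2) ℂ) :
    FiniteDimensional ℂ ↥(Tspace d f₀ c) := by
  haveI := fd_Vd d
  exact Submodule.finiteDimensional_of_le
    (show Tspace d f₀ c ≤ VdSub d from inf_le_left)

set_option maxHeartbeats 1000000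

/-- Let `f₀` be a quintic form with smooth zero locus (the partial
derivatives `∂f₀/∂z_i` have no common zero in `ℂ⁵` except the origin). If `c ∈ V_d` is
admissible with `f₀∘c = 0` and `dim T(f₀,c) = 4`, then `c` is an immersion. -/
theorem statement6 (d : ℕ) (hd : 1 ≤ d) (f₀ : MvPolynomial (Fin 5) ℂ) (hf₀ : IsQuintic f₀)
    (hsmooth : ∀ z : Fin 5 → ℂ, (∀ i, eval z (pderiv i f₀) = 0) → z = 0)
    (c : Fin 5 → MvPolynomial (Fin 2) ℂ) (hadm : Admissible d c)
    (h0 : aeval c f₀ = 0)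
    (hT : Module.finrank ℂ ↥(Tspace d f₀ c) = 4) :
    IsImmersion c := by
  intro v hv
  by_contra hdep
  have hVd := hadm.1
  have hnz := hadm.2.1
  have hhom : ∀ i, (c i).IsHomogeneous d := hom_of_mem hVd
  have hd0 : (d : ℂ) ≠ 0 := Nat.cast_ne_zero.mpr (by omega)
  have hchain : ∀ k : Fin 2, ∑ i, aeval c (pderiv i f₀) * pderiv k (c i) = 0 := by
    intro k
    have := chainrule k c f₀
    rw [h0, map_zero] at this
    exact this.symm
  have heuler : ∀ i, X 0 * pderiv 0 (c i) + X 1 * pderiv 1 (c i) = C (d : ℂ) * c i :=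
    fun i => euler2 (hhom i)
  have heval_euler : ∀ i, v 0 * eval v (pderiv 0 (c i)) + v 1 * eval v (pderiv 1 (c i))
      = (d : ℂ) * eval v (c i) := by
    intro i
    have := congrArg (eval v) (heuler i)
    simpa using this
  -- get the ramification scalars
  rw [linearIndependent_fin2] at hdep
  push_neg at hdep
  simp only [Matrix.cons_val_one, Matrix.head_cons, Matrix.cons_val_zero] at hdep
  have hlm : ∃ lam muu : ℂ, (∀ i, eval v (pderiv 0 (c i)) = lam * eval v (c i)) ∧
      (∀ i, eval v (pderiv 1 (c i)) = muu * eval v (c i)) ∧ v 0 * lam + v 1 * muu = (d : ℂ) := by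
    by_cases hB : (fun i => eval v (pderiv 1 (c i))) = (0 : Fin 5 → ℂ)
    · have hBi : ∀ i, eval v (pderiv 1 (c i)) = 0 := fun i => congrFun hB i
      have hs0 : v 0 ≠ 0 := by
        intro h00
        apply hnz v hv
        funext i
        have := heval_euler i
        rw [h00, hBi i, zero_mul, mul_zero, add_zero] at this
        have := this.symm
        rcases mul_eq_zero.mp this with h1 | h2
        · exact absurd h1 hd0
        · exact h2
      refine ⟨(d : ℂ) / v 0, 0, fun i => ?_, fun i => by rw [hBi i, zero_mul], by rw [mul_zero, add_zero, mul_div_assoc', mul_div_cancel_left₀ _ hs0]⟩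
      have := heval_euler i
      rw [hBi i, mul_zero, add_zero] at this
      field_simp
      linear_combination this
    · obtain ⟨a, ha⟩ := hdep hB
      have ha' : ∀ i, eval v (pderiv 0 (c i)) = a * eval v (pderiv 1 (c i)) := by
        intro i
        have := congrFun ha i
        simpa using this.symm
      have ht0 : v 0 * a + v 1 ≠ 0 := by
        intro h00
        apply hnz v hv
        funext i
        have h2 := heval_euler i
        rw [ha' i] at h2
        have h3 : (v 0 * a + v 1) * eval v (pderiv 1 (c i)) = (d : ℂ) * eval v (c i) := by
          linear_combination h2
        rw [h00, zero_mul] at h3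
        rcases mul_eq_zero.mp h3.symm with h4 | h5
        · exact absurd h4 hd0
        · exact h5
      refine ⟨a * (d : ℂ) / (v 0 * a + v 1), (d : ℂ) / (v 0 * a + v 1), fun i => ?_,
        fun i => ?_, by field_simp⟩
      · have h2 := heval_euler i
        rw [ha' i] at h2
        rw [ha' i]
        rw [div_mul_eq_mul_div, eq_div_iff ht0]
        linear_combination a * h2
      · have h2 := heval_euler i
        rw [ha' i] at h2
        field_simp
        linear_combination h2
  obtain ⟨lam, muu, hA, hB, hlmsum⟩ := hlm
  -- the auxiliary tuple φ i = C muu * ∂₀ c i - C lam * ∂₁ c i vanishes at v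
  have hφhom : ∀ i, (C muu * pderiv 0 (c i) - C lam * pderiv 1 (c i)).IsHomogeneous (d - 1) :=
    fun i => ((pderiv_homog (hhom i) 0).C_mul _).sub ((pderiv_homog (hhom i) 1).C_mul _)
  have hφv : ∀ i, eval v (C muu * pderiv 0 (c i) - C lam * pderiv 1 (c i)) = 0 := by
    intro i
    rw [eval_sub, eval_mul, eval_mul, eval_C, eval_C, hA i, hB i]
    ring
  by_cases hφ0 : ∀ i, C muu * pderiv 0 (c i) - C lam * pderiv 1 (c i) = 0
  · -- degenerate case: apply lemW with constants
    have hw := lemW hd hadm (isHomogeneous_C _ muu) ((isHomogeneous_C _ lam).neg)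
      (fun i => by linear_combination hφ0 i)
    have hmu0 : muu = 0 := by
      have := hw.1
      rwa [MvPolynomial.C_eq_zero] at this
    have hlam0 : lam = 0 := by
      have := hw.2
      rw [neg_eq_zero, MvPolynomial.C_eq_zero] at this
      exact this
    rw [hmu0, hlam0] at hlmsum
    simp at hlmsum
    exact hd0 hlmsum.symm
  · push_neg at hφ0
    obtain ⟨i₀, hi₀⟩ := hφ0
    -- divide each φ i by the linear form vanishing at v
    have hdiv := fun i => div_linear (hφhom i) hv (hφv i)
    choose ψ hψhom hψeq using hdiv
    have hd2 : 2 ≤ d := by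
      by_contra hcon
      have hd1 : d = 1 := by omega
      apply hi₀
      have h00 : (C muu * pderiv 0 (c i₀) - C lam * pderiv 1 (c i₀)).IsHomogeneous 0 := by
        have := hφhom i₀; rwa [hd1] at this
      rw [homog_zero_eq_C h00]
      have := hφv i₀
      rw [homog_zero_eq_C h00, eval_C] at this
      rw [this, map_zero]
    have hl1 : (C (v 1) * X 0 - C (v 0) * X 1 : MvPolynomial (Fin 2) ℂ).IsHomogeneous 1 :=
      ((isHomogeneous_X _ 0).C_mul _).sub ((isHomogeneous_X _ 1).C_mul _)
    have hlne : (C (v 1) * X 0 - C (v 0) * X 1 : MvPolynomial (Fin 2) ℂ) ≠ 0 := by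
      intro h00
      by_cases hv1 : v 1 ≠ 0
      · have := congrArg (eval ![1, 0]) h00
        simp at this
        exact hv1 this
      · push_neg at hv1
        have hv0 : v 0 ≠ 0 := by
          intro h01
          apply hv
          funext j
          by_cases hj : j = 0
          · subst hj; exact h01
          · rw [Fin.eq_one_of_ne_zero j hj]; exact hv1
        have := congrArg (eval ![0, 1]) h00
        simp at this
        exact hv0 this
    -- a linear form with value 1 at v
    obtain ⟨m₀, hm₀hom, hm₀v⟩ : ∃ m₀ : MvPolynomial (Fin 2) ℂ,
        m₀.IsHomogeneous 1 ∧ eval v m₀ = 1 := by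
      by_cases hv0 : v 0 ≠ 0
      · refine ⟨C (v 0)⁻¹ * X 0, (isHomogeneous_X _ 0).C_mul _, ?_⟩
        rw [eval_mul, eval_C, eval_X]
        field_simp
      · push_neg at hv0
        have hv1 : v 1 ≠ 0 := by
          intro h01
          apply hv
          funext j
          by_cases hj : j = 0
          · subst hj; exact hv0
          · rw [Fin.eq_one_of_ne_zero j hj]; exact h01
        refine ⟨C (v 1)⁻¹ * X 1, (isHomogeneous_X _ 1).C_mul _, ?_⟩
        rw [eval_mul, eval_C, eval_X]
        field_simp
    -- tangency sums
    have hchainφ : ∑ i, aeval c (pderiv i f₀) * (C muu * pderiv 0 (c i) - C lam * pderiv 1 (c i)) = 0 := by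
      have h01 := hchain 0
      have h11 := hchain 1
      calc ∑ i, aeval c (pderiv i f₀) * (C muu * pderiv 0 (c i) - C lam * pderiv 1 (c i))
          = C muu * (∑ i, aeval c (pderiv i f₀) * pderiv 0 (c i))
            - C lam * (∑ i, aeval c (pderiv i f₀) * pderiv 1 (c i)) := by
            rw [Finset.mul_sum, Finset.mul_sum, ← Finset.sum_sub_distrib]
            exact Finset.sum_congr rfl fun i _ => by ring
        _ = 0 := by rw [h01, h11]; ring
    have hψsum : ∑ i, aeval c (pderiv i f₀) * ψ i = 0 := by
      have hls : (C (v 1) * X 0 - C (v 0) * X 1) * (∑ i, aeval c (pderiv i f₀) * ψ i) = 0 := by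
        rw [Finset.mul_sum]
        rw [show ∑ i, (C (v 1) * X 0 - C (v 0) * X 1) * (aeval c (pderiv i f₀) * ψ i)
            = ∑ i, aeval c (pderiv i f₀) * (C muu * pderiv 0 (c i) - C lam * pderiv 1 (c i))
          from Finset.sum_congr rfl fun i _ => by rw [hψeq i]; ring]
        exact hchainφ
      exact (mul_eq_zero.mp hls).resolve_left hlne
    -- membership helper
    have hmem_aux : ∀ (r : MvPolynomial (Fin 2) ℂ), r.IsHomogeneous 1 →
        ∀ (w : Fin 5 → MvPolynomial (Fin 2) ℂ), (∀ i, (w i).IsHomogeneous (d - 1)) →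
        (∑ i, aeval c (pderiv i f₀) * w i = 0) →
        (fun i => r * w i) ∈ Tspace d f₀ c := by
      intro r hr w hw hws
      apply Submodule.mem_inf.mpr
      constructor
      · rw [VdSub, Submodule.mem_pi]
        intro i _
        rw [mem_homogeneousSubmodule]
        have := hr.mul (hw i)
        rwa [show 1 + (d - 1) = d from by omega] at this
      · rw [LinearMap.mem_ker]
        show (∑ i, (r * w i) * aeval c (pderiv i f₀)) = 0
        rw [show ∑ i, (r * w i) * aeval c (pderiv i f₀)
            = r * ∑ i, aeval c (pderiv i f₀) * w i from by
          rw [Finset.mul_sum]; exact Finset.sum_congr rfl fun i _ => by ring]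
        rw [hws, mul_zero]
    -- the four reparametrization tangent vectors
    set b : Fin 4 → (Fin 5 → MvPolynomial (Fin 2) ℂ) :=
      ![fun i => X 0 * pderiv 0 (c i), fun i => X 1 * pderiv 0 (c i),
        fun i => X 0 * pderiv 1 (c i), fun i => X 1 * pderiv 1 (c i)] with hbdef
    have hbmem : ∀ j, b j ∈ Tspace d f₀ c := by
      intro j
      fin_cases j
      · exact hmem_aux (X 0) (isHomogeneous_X _ 0) _ (fun i => pderiv_homog (hhom i) 0) (hchain 0)
      · exact hmem_aux (X 1) (isHomogeneous_X _ 1) _ (fun i => pderiv_homog (hhom i) 0) (hchain 0)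
      · exact hmem_aux (X 0) (isHomogeneous_X _ 0) _ (fun i => pderiv_homog (hhom i) 1) (hchain 1)
      · exact hmem_aux (X 1) (isHomogeneous_X _ 1) _ (fun i => pderiv_homog (hhom i) 1) (hchain 1)
    have hψhom' : ∀ i, (m₀ * ψ i).IsHomogeneous (d - 1) := by
      intro i
      have := hm₀hom.mul (hψhom i)
      rwa [show 1 + (d - 1 - 1) = d - 1 from by omega] at this
    have hψsum' : ∑ i, aeval c (pderiv i f₀) * (m₀ * ψ i) = 0 := by
      rw [show ∑ i, aeval c (pderiv i f₀) * (m₀ * ψ i)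
          = m₀ * ∑ i, aeval c (pderiv i f₀) * ψ i from by
        rw [Finset.mul_sum]; exact Finset.sum_congr rfl fun i _ => by ring]
      rw [hψsum, mul_zero]
    have hb5mem : (fun i => X 0 * (m₀ * ψ i)) ∈ Tspace d f₀ c :=
      hmem_aux (X 0) (isHomogeneous_X _ 0) _ hψhom' hψsum'
    have hb6mem : (fun i => X 1 * (m₀ * ψ i)) ∈ Tspace d f₀ c :=
      hmem_aux (X 1) (isHomogeneous_X _ 1) _ hψhom' hψsum'
    -- linear independence of the four
    have hbind : LinearIndependent ℂ b := by
      rw [Fintype.linearIndependent_iff]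
      intro g hg
      have hrel4 : ∀ i5 : Fin 5,
          (C (g 0) * X 0 + C (g 1) * X 1) * pderiv 0 (c i5)
            + (C (g 2) * X 0 + C (g 3) * X 1) * pderiv 1 (c i5) = 0 := by
        intro i5
        have hgc := congrFun hg i5
        simp only [Finset.sum_apply, Pi.smul_apply, Pi.zero_apply, Fin.sum_univ_four,
          hbdef, Matrix.cons_val_zero, Matrix.cons_val_one, Matrix.head_cons,
          Matrix.cons_val_two, Matrix.tail_cons, Matrix.cons_val_three,
          smul_eq_C_mul] at hgc
        linear_combination hgc
      have hw := lemW hd hadm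
        (((isHomogeneous_X _ 0).C_mul _).add ((isHomogeneous_X _ 1).C_mul _))
        (((isHomogeneous_X _ 0).C_mul _).add ((isHomogeneous_X _ 1).C_mul _)) hrel4
      have hg0 : g 0 = 0 := by
        have := congrArg (eval ![1, 0]) hw.1; simpa using this
      have hg1 : g 1 = 0 := by
        have := congrArg (eval ![0, 1]) hw.1; simpa using this
      have hg2 : g 2 = 0 := by
        have := congrArg (eval ![1, 0]) hw.2; simpa using this
      have hg3 : g 3 = 0 := by
        have := congrArg (eval ![0, 1]) hw.2; simpa using this
      intro j
      fin_cases j <;> assumption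
    -- the key finrank contradiction
    haveI := fd_T d f₀ c
    have hkey : ∀ bstar : Fin 5 → MvPolynomial (Fin 2) ℂ, bstar ∈ Tspace d f₀ c →
        bstar ∉ Submodule.span ℂ (Set.range b) → False := by
      intro bstar hmem hnot
      have hli5 : LinearIndependent ℂ (Fin.cons bstar b : Fin 5 → (Fin 5 → MvPolynomial (Fin 2) ℂ)) :=
        linearIndependent_fin_cons.mpr ⟨hbind, hnot⟩
      have hle : Submodule.span ℂ (Set.range (Fin.cons bstar b : Fin 5 → (Fin 5 → MvPolynomial (Fin 2) ℂ)))
          ≤ Tspace d f₀ c := by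
        rw [Submodule.span_le]
        rintro x ⟨j, rfl⟩
        cases j using Fin.cases with
        | zero => simp only [Fin.cons_zero]; exact hmem
        | succ j' => simp only [Fin.cons_succ]; exact hbmem j' 
      have h5 : Module.finrank ℂ
          (Submodule.span ℂ (Set.range (Fin.cons bstar b : Fin 5 → (Fin 5 → MvPolynomial (Fin 2) ℂ)))) = 5 := by
        rw [finrank_span_eq_card hli5]
        simp
      have hle5 := Submodule.finrank_mono hle
      rw [h5, hT] at hle5
      omega
    -- at least one of b5, b6 is outside the span
    have hb56 : (fun i => X 0 * (m₀ * ψ i)) ∉ Submodule.span ℂ (Set.range b)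
        ∨ (fun i => X 1 * (m₀ * ψ i)) ∉ Submodule.span ℂ (Set.range b) := by
      by_contra hcon
      push_neg at hcon
      obtain ⟨h5, h6⟩ := hcon
      rw [Submodule.mem_span_range_iff_exists_fun] at h5 h6
      obtain ⟨aa, haa⟩ := h5
      obtain ⟨bb, hbb⟩ := h6
      have eqA : ∀ i, X 0 * (m₀ * ψ i)
          = (C (aa 0) * X 0 + C (aa 1) * X 1) * pderiv 0 (c i)
            + (C (aa 2) * X 0 + C (aa 3) * X 1) * pderiv 1 (c i) := by
        intro i
        have hgc := congrFun haa i
        simp only [Finset.sum_apply, Pi.smul_apply, Fin.sum_univ_four,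
          hbdef, Matrix.cons_val_zero, Matrix.cons_val_one, Matrix.head_cons,
          Matrix.cons_val_two, Matrix.tail_cons, Matrix.cons_val_three,
          smul_eq_C_mul] at hgc
        linear_combination -hgc
      have eqB : ∀ i, X 1 * (m₀ * ψ i)
          = (C (bb 0) * X 0 + C (bb 1) * X 1) * pderiv 0 (c i)
            + (C (bb 2) * X 0 + C (bb 3) * X 1) * pderiv 1 (c i) := by
        intro i
        have hgc := congrFun hbb i
        simp only [Finset.sum_apply, Pi.smul_apply, Fin.sum_univ_four,
          hbdef, Matrix.cons_val_zero, Matrix.cons_val_one, Matrix.head_cons,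
          Matrix.cons_val_two, Matrix.tail_cons, Matrix.cons_val_three,
          smul_eq_C_mul] at hgc
        linear_combination -hgc
      -- quadratic relation
      have hquad := lemW hd hadm
        (((((isHomogeneous_X _ 0).C_mul (aa 0)).add ((isHomogeneous_X _ 1).C_mul (aa 1))).mul
          (isHomogeneous_X _ 1)).sub
          ((((isHomogeneous_X _ 0).C_mul (bb 0)).add ((isHomogeneous_X _ 1).C_mul (bb 1))).mul
          (isHomogeneous_X _ 0)))
        (((((isHomogeneous_X _ 0).C_mul (aa 2)).add ((isHomogeneous_X _ 1).C_mul (aa 3))).mul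
          (isHomogeneous_X _ 1)).sub
          ((((isHomogeneous_X _ 0).C_mul (bb 2)).add ((isHomogeneous_X _ 1).C_mul (bb 3))).mul
          (isHomogeneous_X _ 0)))
        (fun i => by linear_combination (X 0) * eqB i - (X 1) * eqA i)
      -- extract coefficients from the two quadratic identities
      have ha1 : aa 1 = 0 := by
        have := congrArg (eval ![0, 1]) hquad.1; simpa using this
      have hb0 : bb 0 = 0 := by
        have := congrArg (eval ![1, 0]) hquad.1
        simp at this
        exact this
      have ha0b1 : aa 0 = bb 1 := by
        have := congrArg (eval ![1, 1]) hquad.1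
        simp [ha1, hb0] at this
        linear_combination this
      have ha3 : aa 3 = 0 := by
        have := congrArg (eval ![0, 1]) hquad.2; simpa using this
      have hb2 : bb 2 = 0 := by
        have := congrArg (eval ![1, 0]) hquad.2
        simp at this
        exact this
      have ha2b3 : aa 2 = bb 3 := by
        have := congrArg (eval ![1, 1]) hquad.2
        simp [ha3, hb2] at this
        linear_combination this
      -- cancel X 0
      have hθ : ∀ i, m₀ * ψ i = C (aa 0) * pderiv 0 (c i) + C (aa 2) * pderiv 1 (c i) := by
        intro i
        apply mul_left_cancel₀ (X_ne_zero (0 : Fin 2))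
        rw [eqA i, ha1, ha3, map_zero]
        ring
      -- final linear relation
      have hlin := lemW hd hadm
        ((hm₀hom.C_mul muu).sub (hl1.C_mul (aa 0)))
        (((hm₀hom.C_mul lam).neg).sub (hl1.C_mul (aa 2)))
        (fun i => by linear_combination m₀ * hψeq i + (C (v 1) * X 0 - C (v 0) * X 1) * hθ i)
      have hmu0 : muu = 0 := by
        have hev := congrArg (eval v) hlin.1
        simp only [eval_sub, eval_mul, eval_C, eval_X, map_zero, hm₀v] at hev
        linear_combination hev
      have hlam0 : lam = 0 := by
        have hev := congrArg (eval v) hlin.2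
        simp only [eval_sub, eval_neg, eval_mul, eval_C, eval_X, map_zero, hm₀v] at hev
        linear_combination -hev
      rw [hmu0, hlam0] at hlmsum
      simp at hlmsum
      exact hd0 hlmsum.symm
    rcases hb56 with h | h
    · exact hkey _ hb5mem h
    · exact hkey _ hb6mem h

end
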